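/- Let 0 < α < ω₁ and let f : X → Y have a σ-sfd base consisting of functionally ambiguous sets of class α. Then f is of the α'th functionally Lebesgue class: the preimage of every open set in Y is of the α'th functionally additive class in X. -/

import Mathlib

open Set Topology Ordinal

/-- A family of sets is discrete if every point has an open neighborhood
meeting at most one member of the family. -/
def DiscreteFam {X I : Type*} [TopologicalSpace X] (U : I → Set X) : Prop :=
  ∀ x : X, ∃ V : Set X, IsOpen V ∧ x ∈ V ∧
    ∀ i j : I, (V ∩ U i).Nonempty → (V ∩ U j).Nonempty → i = j

/-- A set is functionally closed (a zero set) if it is the preimage of `{0}`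
under a continuous real-valued function. -/
def FunClosed {X : Type*} [TopologicalSpace X] (F : Set X) : Prop :=
  ∃ f : X → ℝ, Continuous f ∧ F = f ⁻¹' {0}

/-- A set is functionally open if its complement is functionally closed. -/
def FunOpen {X : Type*} [TopologicalSpace X] (U : Set X) : Prop :=
  FunClosed Uᶜ

/-- The pair (α'th functionally multiplicative class, α'th functionally additive class),
defined by transfinite recursion. -/
noncomputable def FunClassPair (X : Type*) [TopologicalSpace X] (α : Ordinal) :
    Set (Set X) × Set (Set X) :=
  if α = 0 then ({F | FunClosed F}, {U | FunOpen U})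
  else
    ({ A | ∃ f : ℕ → Set X, (∀ n, ∃ β, ∃ _ : β < α, f n ∈ (FunClassPair X β).2) ∧ A = ⋂ n, f n },
     { A | ∃ f : ℕ → Set X, (∀ n, ∃ β, ∃ _ : β < α, f n ∈ (FunClassPair X β).1) ∧ A = ⋃ n, f n })
termination_by α

/-- The α'th functionally multiplicative class. -/
noncomputable def FunMul (X : Type*) [TopologicalSpace X] (α : Ordinal) : Set (Set X) :=
  (FunClassPair X α).1

/-- The α'th functionally additive class. -/
noncomputable def FunAdd (X : Type*) [TopologicalSpace X] (α : Ordinal) : Set (Set X) :=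
  (FunClassPair X α).2

/-- Functionally ambiguous sets of class α. -/
noncomputable def FunAmb {X : Type*} [TopologicalSpace X] (α : Ordinal) (A : Set X) : Prop :=
  A ∈ FunAdd X α ∧ A ∈ FunMul X α

/-- A family is strongly functionally discrete (sfd). -/
def SFDFam {X I : Type*} [TopologicalSpace X] (A : I → Set X) : Prop :=
  ∃ U : I → Set X, DiscreteFam U ∧ (∀ i, FunOpen (U i)) ∧ ∀ i, closure (A i) ⊆ U i

/-- A collection of sets is sfd (viewed as a family indexed by itself). -/
def SFDSet {X : Type*} [TopologicalSpace X] (𝒜 : Set (Set X)) : Prop :=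
  SFDFam (fun b : 𝒜 => (b : Set X))

/-- A collection of sets is a well sfd-family. -/
def WellSFDSet {X : Type*} [TopologicalSpace X] (𝒜 : Set (Set X)) : Prop :=
  ∃ U F : 𝒜 → Set X, DiscreteFam U ∧ DiscreteFam F ∧
    (∀ b, FunOpen (U b)) ∧ (∀ b, FunClosed (F b)) ∧
    ∀ b : 𝒜, (b : Set X) ⊆ F b ∧ F b ⊆ U b

/-- An indexed family is σ-sfd if the index set splits into countably many pieces
on each of which the family is sfd. -/
def SigmaSFDFam {X I : Type*} [TopologicalSpace X] (A : I → Set X) : Prop :=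
  ∃ J : ℕ → Set I, (∀ n, SFDFam (fun i : J n => A i)) ∧ (⋃ n, J n) = Set.univ

/-- `B` is a base for the mapping `f`: every preimage of an open set is a union
of members of `B`. -/
def IsBaseFor {X Y : Type*} [TopologicalSpace X] [TopologicalSpace Y]
    (B : Set (Set X)) (f : X → Y) : Prop :=
  ∀ V : Set Y, IsOpen V → ∃ S ⊆ B, f ⁻¹' V = ⋃₀ S

/-- `f` has a σ-strongly-functionally-discrete base. -/
def SigmaSFD {X Y : Type*} [TopologicalSpace X] [TopologicalSpace Y] (f : X → Y) : Prop :=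
  ∃ B : ℕ → Set (Set X), (∀ n, SFDSet (B n)) ∧ IsBaseFor (⋃ n, B n) f

/-- `f` has a σ-sfd base consisting of functionally ambiguous sets of class α. -/
noncomputable def SigmaSFDAmb {X Y : Type*} [TopologicalSpace X] [TopologicalSpace Y]
    (α : Ordinal) (f : X → Y) : Prop :=
  ∃ B : ℕ → Set (Set X), (∀ n, SFDSet (B n)) ∧ (∀ n, ∀ b ∈ B n, FunAmb α b) ∧
    IsBaseFor (⋃ n, B n) f

/-- `f` belongs to the α'th functionally Lebesgue class. -/
noncomputable def LebClass {X Y : Type*} [TopologicalSpace X] [TopologicalSpace Y]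
    (α : Ordinal) (f : X → Y) : Prop :=
  ∀ V : Set Y, IsOpen V → f ⁻¹' V ∈ FunAdd X α

/-- `Y` has a σ-disjoint base. -/
def SigmaDisjointBase (Y : Type*) [TopologicalSpace Y] : Prop :=
  ∃ V : ℕ → Set (Set Y), (∀ m, (V m).PairwiseDisjoint id) ∧
    TopologicalSpace.IsTopologicalBasis (⋃ m, V m)

section Aux

variable {X : Type*} [TopologicalSpace X]

lemma funClosed_empty : FunClosed (∅ : Set X) :=
  ⟨fun _ => 1, continuous_const, by ext x; simp⟩

lemma funClosed_univ : FunClosed (univ : Set X) :=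
  ⟨fun _ => 0, continuous_const, by ext x; simp⟩

lemma funOpen_univ : FunOpen (univ : Set X) := by
  unfold FunOpen; rw [compl_univ]; exact funClosed_empty

lemma funOpen_empty : FunOpen (∅ : Set X) := by
  unfold FunOpen; rw [compl_empty]; exact funClosed_univ

lemma funClosed_inter {F G : Set X} (hF : FunClosed F) (hG : FunClosed G) :
    FunClosed (F ∩ G) := by
  obtain ⟨f, hf, rfl⟩ := hF; obtain ⟨g, hg, rfl⟩ := hG
  refine ⟨fun x => |f x| + |g x|, (hf.abs.add hg.abs), ?_⟩
  ext x
  simp only [mem_inter_iff, mem_preimage, mem_singleton_iff]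
  constructor
  · rintro ⟨h1, h2⟩; simp [h1, h2]
  · intro h
    have h1 : |f x| = 0 ∧ |g x| = 0 := by
      constructor <;> nlinarith [abs_nonneg (f x), abs_nonneg (g x)]
    exact ⟨abs_eq_zero.1 h1.1, abs_eq_zero.1 h1.2⟩

lemma funClosed_union {F G : Set X} (hF : FunClosed F) (hG : FunClosed G) :
    FunClosed (F ∪ G) := by
  obtain ⟨f, hf, rfl⟩ := hF; obtain ⟨g, hg, rfl⟩ := hG
  refine ⟨fun x => f x * g x, hf.mul hg, ?_⟩
  ext x
  simp only [mem_union, mem_preimage, mem_singleton_iff, mul_eq_zero]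

lemma funOpen_inter {U W : Set X} (hU : FunOpen U) (hW : FunOpen W) :
    FunOpen (U ∩ W) := by
  unfold FunOpen at *
  rw [compl_inter]
  exact funClosed_union hU hW

lemma funOpen_iUnion_funClosed {U : Set X} (h : FunOpen U) :
    ∃ K : ℕ → Set X, (∀ k, FunClosed (K k)) ∧ U = ⋃ k, K k := by
  obtain ⟨g, hg, hU⟩ := h
  have hmem : ∀ x, x ∈ U ↔ g x ≠ 0 := by
    intro x
    rw [← not_iff_not, not_ne_iff, ← mem_compl_iff, hU]
    simp
  refine ⟨fun k => (fun x => max (1/(k+1 : ℝ) - |g x|) 0) ⁻¹' {0},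
    fun k => ⟨_, (continuous_const.sub hg.abs).max continuous_const, rfl⟩, ?_⟩
  ext x
  simp only [mem_iUnion, mem_preimage, mem_singleton_iff, max_eq_right_iff,
    sub_nonpos, hmem]
  constructor
  · intro hx
    obtain ⟨k, hk⟩ := exists_nat_one_div_lt (abs_pos.2 hx)
    exact ⟨k, le_of_lt hk⟩
  · rintro ⟨k, hk⟩
    intro h0
    rw [h0] at hk
    simp only [abs_zero] at hk
    have : (0:ℝ) < 1/(k+1 : ℝ) := by positivity
    linarith

lemma funClosed_iInter_funOpen {F : Set X} (h : FunClosed F) :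
    ∃ W : ℕ → Set X, (∀ k, FunOpen (W k)) ∧ F = ⋂ k, W k := by
  obtain ⟨f, hf, rfl⟩ := h
  refine ⟨fun k => {x | |f x| < 1/(k+1 : ℝ)}, fun k => ?_, ?_⟩
  · refine ⟨fun x => max (1/(k+1 : ℝ) - |f x|) 0, (continuous_const.sub hf.abs).max continuous_const, ?_⟩
    ext x
    simp only [mem_compl_iff, mem_setOf_eq, not_lt, mem_preimage, mem_singleton_iff,
      max_eq_right_iff, sub_nonpos]
  · ext x
    simp only [mem_preimage, mem_singleton_iff, mem_iInter, mem_setOf_eq]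
    constructor
    · intro h0 k; rw [h0]; simp; positivity
    · intro hk
      by_contra h0
      obtain ⟨k, hklt⟩ := exists_nat_one_div_lt (abs_pos.2 h0)
      exact absurd (hk k) (not_lt.2 (le_of_lt hklt))

end Aux

section Classes

variable {X : Type*} [TopologicalSpace X]

lemma funMul_zero_iff {A : Set X} : A ∈ FunMul X 0 ↔ FunClosed A := by
  rw [FunMul, FunClassPair]; simp

lemma funAdd_zero_iff {A : Set X} : A ∈ FunAdd X 0 ↔ FunOpen A := by
  rw [FunAdd, FunClassPair]; simp

lemma mem_funMul_iff {α : Ordinal} (hα : α ≠ 0) {A : Set X} :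
    A ∈ FunMul X α ↔
      ∃ f : ℕ → Set X, (∀ n, ∃ β, β < α ∧ f n ∈ FunAdd X β) ∧ A = ⋂ n, f n := by
  rw [FunMul, FunClassPair, if_neg hα]
  simp only [exists_prop]
  rfl

lemma mem_funAdd_iff {α : Ordinal} (hα : α ≠ 0) {A : Set X} :
    A ∈ FunAdd X α ↔
      ∃ f : ℕ → Set X, (∀ n, ∃ β, β < α ∧ f n ∈ FunMul X β) ∧ A = ⋃ n, f n := by
  rw [FunAdd, FunClassPair, if_neg hα]
  simp only [exists_prop]
  rfl

lemma funClosed_mem_funMul {F : Set X} (h : FunClosed F) (α : Ordinal) :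
    F ∈ FunMul X α := by
  rcases eq_or_ne α 0 with rfl | hα
  · exact funMul_zero_iff.2 h
  · obtain ⟨W, hW, hF⟩ := funClosed_iInter_funOpen h
    exact (mem_funMul_iff hα).2
      ⟨W, fun n => ⟨0, pos_iff_ne_zero.2 hα, funAdd_zero_iff.2 (hW n)⟩, hF⟩

lemma funOpen_mem_funAdd {U : Set X} (h : FunOpen U) (α : Ordinal) :
    U ∈ FunAdd X α := by
  rcases eq_or_ne α 0 with rfl | hα
  · exact funAdd_zero_iff.2 h
  · obtain ⟨K, hK, hU⟩ := funOpen_iUnion_funClosed h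
    exact (mem_funAdd_iff hα).2
      ⟨K, fun n => ⟨0, pos_iff_ne_zero.2 hα, funMul_zero_iff.2 (hK n)⟩, hU⟩

lemma empty_mem_funMul (α : Ordinal) : (∅ : Set X) ∈ FunMul X α :=
  funClosed_mem_funMul funClosed_empty α

lemma univ_mem_funAdd (α : Ordinal) : (univ : Set X) ∈ FunAdd X α :=
  funOpen_mem_funAdd funOpen_univ α

lemma funMul_mono {β γ : Ordinal} (h : β ≤ γ) : FunMul X β ⊆ FunMul X γ := by
  rcases eq_or_lt_of_le h with rfl | hlt
  · exact subset_rfl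
  · intro M hM
    have hγ : γ ≠ 0 := (pos_iff_ne_zero.1 ((zero_le (a := β)).trans_lt hlt))
    rcases eq_or_ne β 0 with rfl | hβ
    · exact funClosed_mem_funMul (funMul_zero_iff.1 hM) γ
    · obtain ⟨f, hf, rfl⟩ := (mem_funMul_iff hβ).1 hM
      exact (mem_funMul_iff hγ).2
        ⟨f, fun n => by obtain ⟨δ, hδ, hm⟩ := hf n; exact ⟨δ, hδ.trans hlt, hm⟩, rfl⟩

lemma funAdd_mono {β γ : Ordinal} (h : β ≤ γ) : FunAdd X β ⊆ FunAdd X γ := by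
  rcases eq_or_lt_of_le h with rfl | hlt
  · exact subset_rfl
  · intro A hA
    have hγ : γ ≠ 0 := (pos_iff_ne_zero.1 ((zero_le (a := β)).trans_lt hlt))
    rcases eq_or_ne β 0 with rfl | hβ
    · exact funOpen_mem_funAdd (funAdd_zero_iff.1 hA) γ
    · obtain ⟨f, hf, rfl⟩ := (mem_funAdd_iff hβ).1 hA
      exact (mem_funAdd_iff hγ).2
        ⟨f, fun n => by obtain ⟨δ, hδ, hm⟩ := hf n; exact ⟨δ, hδ.trans hlt, hm⟩, rfl⟩

lemma funAdd_iUnion {γ : Ordinal} (hγ : γ ≠ 0) {A : ℕ → Set X}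
    (h : ∀ n, A n ∈ FunAdd X γ) : (⋃ n, A n) ∈ FunAdd X γ := by
  choose g hg hA using fun n => (mem_funAdd_iff hγ).1 (h n)
  set q : ℕ × ℕ ≃ ℕ := Denumerable.eqv (ℕ × ℕ) with hq
  refine (mem_funAdd_iff hγ).2 ⟨fun p => g (q.symm p).1 (q.symm p).2,
    fun p => hg _ _, ?_⟩
  ext x
  simp only [mem_iUnion]
  constructor
  · rintro ⟨n, hn⟩
    rw [hA n] at hn
    obtain ⟨m, hm⟩ := mem_iUnion.1 hn
    exact ⟨q (n, m), by simpa using hm⟩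
  · rintro ⟨p, hp⟩
    refine ⟨(q.symm p).1, ?_⟩
    rw [hA (q.symm p).1]
    exact mem_iUnion.2 ⟨(q.symm p).2, hp⟩

lemma inter_aux (γ : Ordinal) :
    (∀ A ∈ FunAdd X γ, ∀ U : Set X, FunOpen U → A ∩ U ∈ FunAdd X γ) ∧
    (∀ M ∈ FunMul X γ, ∀ U : Set X, FunOpen U →
      ∃ P : ℕ → Set X, (∀ k, P k ∈ FunMul X γ) ∧ M ∩ U = ⋃ k, P k) := by
  induction γ using Ordinal.induction with
  | h γ IH =>
  constructor
  · intro A hA U hU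
    rcases eq_or_ne γ 0 with rfl | hγ
    · exact funAdd_zero_iff.2 (funOpen_inter (funAdd_zero_iff.1 hA) hU)
    · obtain ⟨g, hg, rfl⟩ := (mem_funAdd_iff hγ).1 hA
      choose β hβ hm using hg
      choose P hP hPU using fun n => (IH (β n) (hβ n)).2 (g n) (hm n) U hU
      set q : ℕ × ℕ ≃ ℕ := Denumerable.eqv (ℕ × ℕ) with hq
      refine (mem_funAdd_iff hγ).2 ⟨fun p => P (q.symm p).1 (q.symm p).2,
        fun p => ⟨β _, hβ _, hP _ _⟩, ?_⟩
      rw [iUnion_inter]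
      ext x
      simp only [mem_iUnion]
      constructor
      · rintro ⟨n, hn⟩
        rw [hPU n] at hn
        obtain ⟨k, hk⟩ := mem_iUnion.1 hn
        exact ⟨q (n, k), by simpa using hk⟩
      · rintro ⟨p, hp⟩
        refine ⟨(q.symm p).1, ?_⟩
        rw [hPU (q.symm p).1]
        exact mem_iUnion.2 ⟨(q.symm p).2, hp⟩
  · intro M hM U hU
    rcases eq_or_ne γ 0 with rfl | hγ
    · obtain ⟨K, hK, rfl⟩ := funOpen_iUnion_funClosed hU
      exact ⟨fun k => M ∩ K k,
        fun k => funMul_zero_iff.2 (funClosed_inter (funMul_zero_iff.1 hM) (hK k)),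
        by rw [inter_iUnion]⟩
    · obtain ⟨g, hg, rfl⟩ := (mem_funMul_iff hγ).1 hM
      choose β hβ hm using hg
      have hMU : (⋂ n, g n) ∩ U ∈ FunMul X γ := by
        refine (mem_funMul_iff hγ).2 ⟨fun n => g n ∩ U,
          fun n => ⟨β n, hβ n, (IH (β n) (hβ n)).1 (g n) (hm n) U hU⟩, ?_⟩
        rw [iInter_inter]
      exact ⟨fun _ => (⋂ n, g n) ∩ U, fun _ => hMU, (iUnion_const _).symm⟩

end Classes

section Glue

variable {X : Type*} [TopologicalSpace X]

lemma DiscreteFam.mono {I : Type*} {U A : I → Set X} (hU : DiscreteFam U)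
    (h : ∀ i, A i ⊆ U i) : DiscreteFam A := by
  intro x
  obtain ⟨V, hVo, hxV, hV1⟩ := hU x
  exact ⟨V, hVo, hxV, fun i j hi hj =>
    hV1 i j (hi.mono (inter_subset_inter_right V (h i)))
      (hj.mono (inter_subset_inter_right V (h j)))⟩

lemma glue_aux {I : Type*} (U : I → Set X) (hU : DiscreteFam U) (θ : I → X → ℝ)
    (hθc : ∀ i, Continuous (θ i)) (hθ0 : ∀ i x, x ∉ U i → θ i x = 0) :
    ∃ Ψ : X → ℝ, Continuous Ψ ∧ (∀ i x, x ∈ U i → Ψ x = θ i x) ∧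
      ∀ x, (∀ i, x ∉ U i) → Ψ x = 0 := by
  classical
  set Ψ : X → ℝ := fun x => if h : ∃ i, x ∈ U i then θ h.choose x else 0 with hΨ
  have key : ∀ i x, x ∈ U i → Ψ x = θ i x := by
    intro i x hx
    have h : ∃ j, x ∈ U j := ⟨i, hx⟩
    obtain ⟨V, hVo, hxV, hV1⟩ := hU x
    have hc : h.choose = i := hV1 _ _ ⟨x, hxV, h.choose_spec⟩ ⟨x, hxV, hx⟩
    simp only [hΨ, dif_pos h, hc]
  have zero : ∀ x, (∀ i, x ∉ U i) → Ψ x = 0 := by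
    intro x hx
    simp only [hΨ]
    rw [dif_neg (not_exists.2 hx)]
  refine ⟨Ψ, ?_, key, zero⟩
  rw [continuous_iff_continuousAt]
  intro x
  obtain ⟨V, hVo, hxV, hV1⟩ := hU x
  by_cases hmeet : ∃ i, (V ∩ U i).Nonempty
  · obtain ⟨i₀, hi₀⟩ := hmeet
    have hagree : ∀ y ∈ V, Ψ y = θ i₀ y := by
      intro y hy
      by_cases hy' : ∃ j, y ∈ U j
      · obtain ⟨j, hj⟩ := hy'
        rw [key j y hj, hV1 j i₀ ⟨y, hy, hj⟩ hi₀]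
      · rw [zero y (not_exists.1 hy'), hθ0 i₀ y (not_exists.1 hy' i₀)]
    exact ((hθc i₀).continuousAt).congr
      ((Filter.eventuallyEq_of_mem (hVo.mem_nhds hxV) (fun y hy => (hagree y hy).symm)))
  · have hagree : ∀ y ∈ V, Ψ y = 0 := by
      intro y hy
      exact zero y fun i hi => hmeet ⟨i, y, hy, hi⟩
    exact (continuousAt_const (y := (0:ℝ))).congr
      ((Filter.eventuallyEq_of_mem (hVo.mem_nhds hxV) (fun y hy => (hagree y hy).symm)))

lemma discrete_funOpen_iUnion {I : Type*} {A : I → Set X} (hA : DiscreteFam A)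
    (h : ∀ i, FunOpen (A i)) : FunOpen (⋃ i, A i) := by
  choose g hg hgA using h
  have hvan : ∀ i x, x ∉ A i → g i x = 0 := by
    intro i x hx
    have : x ∈ (A i)ᶜ := hx
    rw [hgA i] at this
    exact this
  obtain ⟨Ψ, hΨc, hΨ1, hΨ0⟩ := glue_aux A hA g hg hvan
  refine ⟨Ψ, hΨc, ?_⟩
  ext x
  simp only [mem_compl_iff, mem_iUnion, not_exists, mem_preimage, mem_singleton_iff]
  constructor
  · intro hx
    exact hΨ0 x hx
  · intro hx i hxi
    rw [hΨ1 i x hxi] at hx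
    have : x ∈ (A i)ᶜ := by rw [hgA i]; exact hx
    exact this hxi

lemma discrete_funClosed_iUnion {I : Type*} {U : I → Set X} (hU : DiscreteFam U)
    (hUo : ∀ i, FunOpen (U i)) {F : I → Set X} (hF : ∀ i, FunClosed (F i))
    (hFU : ∀ i, F i ⊆ U i) : FunClosed (⋃ i, F i) := by
  choose f hf hfF using hF
  choose g hg hgU using hUo
  have hgne : ∀ i x, x ∈ U i → g i x ≠ 0 := by
    intro i x hx h0
    have : x ∈ (U i)ᶜ := by rw [hgU i]; exact h0
    exact this hx
  have hfz : ∀ i x, x ∈ F i → f i x = 0 := by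
    intro i x hx
    have : x ∈ (f i) ⁻¹' {0} := by rw [← hfF i]; exact hx
    exact this
  have hden : ∀ i x, 0 < |f i x| + |g i x| := by
    intro i x
    rcases eq_or_ne (f i x) 0 with h0 | h0
    · have hxF : x ∈ F i := by rw [hfF i]; exact h0
      have := hgne i x (hFU i hxF)
      have : 0 < |g i x| := abs_pos.2 this
      have : 0 ≤ |f i x| := abs_nonneg _
      linarith
    · have : 0 < |f i x| := abs_pos.2 h0
      have : 0 ≤ |g i x| := abs_nonneg _
      linarith
  set θ : I → X → ℝ := fun i x => |g i x| / (|f i x| + |g i x|) with hθ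
  have hθc : ∀ i, Continuous (θ i) := fun i =>
    (hg i).abs.div ((hf i).abs.add (hg i).abs) (fun x => (hden i x).ne')
  have hθ0 : ∀ i x, x ∉ U i → θ i x = 0 := by
    intro i x hx
    have : g i x = 0 := by
      have : x ∈ (g i) ⁻¹' {0} := by rw [← hgU i]; exact hx
      exact this
    simp only [hθ, this, abs_zero, zero_div, zero_add, zero_mul]
    ring
  obtain ⟨Ψ, hΨc, hΨ1, hΨ0⟩ := glue_aux U hU θ hθc hθ0
  refine ⟨fun x => Ψ x - 1, hΨc.sub continuous_const, ?_⟩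
  ext x
  simp only [mem_iUnion, mem_preimage, mem_singleton_iff, sub_eq_zero]
  constructor
  · rintro ⟨i, hxF⟩
    have hxU : x ∈ U i := hFU i hxF
    rw [hΨ1 i x hxU]
    simp only [hθ, hfz i x hxF, abs_zero, zero_add]
    exact div_self (abs_ne_zero.2 (hgne i x hxU))
  · intro h1
    by_cases hx : ∃ i, x ∈ U i
    · obtain ⟨i, hxU⟩ := hx
      refine ⟨i, ?_⟩
      rw [hΨ1 i x hxU] at h1
      have heq : |g i x| = |f i x| + |g i x| := by
        rw [div_eq_one_iff_eq (hden i x).ne'] at h1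
        exact h1
      have hf0 : |f i x| = 0 := by linarith
      rw [hfF i]
      exact abs_eq_zero.1 hf0
    · rw [hΨ0 x (not_exists.1 hx)] at h1
      norm_num at h1

end Glue

section Main

variable {X : Type*} [TopologicalSpace X]

lemma exists_enum_Iio {δ : Ordinal} (h0 : δ ≠ 0) (h : δ < ω₁) :
    ∃ e : ℕ → Ordinal, (∀ k, e k < δ) ∧ ∀ ρ, ρ < δ → ∃ k, e k = ρ := by
  have hc : (Set.Iio δ).Countable := by
    rw [Cardinal.countable_iff_lt_aleph_one, Ordinal.mk_Iio_ordinal, Cardinal.lift_lt_aleph_one]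
    rw [← Cardinal.ord_aleph 1] at h
    exact Cardinal.lt_ord.1 h
  obtain ⟨e, he⟩ := hc.exists_eq_range ⟨0, pos_iff_ne_zero.2 h0⟩
  refine ⟨e, fun k => ?_, fun ρ hρ => ?_⟩
  · have : e k ∈ Set.Iio δ := he ▸ mem_range_self k
    exact this
  · have : ρ ∈ range e := he ▸ hρ
    exact this

lemma TU {I : Type*} (U : I → Set X) (hU : DiscreteFam U) (hUo : ∀ i, FunOpen (U i)) :
    ∀ β : Ordinal, β < ω₁ →
      (∀ M : I → Set X, (∀ i, M i ⊆ U i) → (∀ i, M i ∈ FunMul X β) →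
        (⋃ i, M i) ∈ FunMul X β) ∧
      (∀ A : I → Set X, (∀ i, A i ⊆ U i) → (∀ i, A i ∈ FunAdd X β) →
        (⋃ i, A i) ∈ FunAdd X β) := by
  intro β
  induction β using Ordinal.induction with
  | h β IH =>
  intro hβω
  classical
  constructor
  · intro M hMU hM
    rcases eq_or_ne β 0 with rfl | hβ
    · exact funMul_zero_iff.2
        (discrete_funClosed_iUnion hU hUo (fun i => funMul_zero_iff.1 (hM i)) hMU)
    · obtain ⟨e, helt, hesurj⟩ := exists_enum_Iio hβ hβω
      choose g hg hMg using fun i => (mem_funMul_iff hβ).1 (hM i)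
      choose ρ hρlt hρmem using hg
      set D : ℕ → ℕ → I → Set X :=
        fun n j i => (if ρ i n ≤ e j then g i n else univ) ∩ U i with hD
      have hDadd : ∀ n j i, D n j i ∈ FunAdd X (e j) := by
        intro n j i
        refine (inter_aux (e j)).1 _ ?_ _ (hUo i)
        split_ifs with hle
        · exact funAdd_mono hle (hρmem i n)
        · exact univ_mem_funAdd _
      have hS : ∀ n j, (⋃ i, D n j i) ∈ FunAdd X (e j) := fun n j =>
        (IH (e j) (helt j) ((helt j).trans hβω)).2 (D n j)
          (fun i => inter_subset_right) (hDadd n j)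
      set q : ℕ × ℕ ≃ ℕ := Denumerable.eqv (ℕ × ℕ) with hq
      refine (mem_funMul_iff hβ).2 ⟨fun p => ⋃ i, D (q.symm p).1 (q.symm p).2 i,
        fun p => ⟨e (q.symm p).2, helt _, hS _ _⟩, ?_⟩
      ext x
      simp only [mem_iUnion, mem_iInter]
      constructor
      · rintro ⟨i, hxi⟩ p
        have hxU : x ∈ U i := hMU i hxi
        have hxg : ∀ n, x ∈ g i n := by
          intro n
          have := hxi
          rw [hMg i] at this
          exact mem_iInter.1 this n
        refine ⟨i, ?_⟩
        simp only [hD, mem_inter_iff]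
        refine ⟨?_, hxU⟩
        split_ifs
        · exact hxg _
        · exact mem_univ x
      · intro hp
        choose ip hip' using hp
        obtain ⟨V, hVo, hxV, hV1⟩ := hU x
        have heq : ∀ p, ip p = ip 0 := fun p =>
          hV1 _ _ ⟨x, hxV, (hip' p).2⟩ ⟨x, hxV, (hip' 0).2⟩
        refine ⟨ip 0, ?_⟩
        rw [hMg (ip 0)]
        refine mem_iInter.2 fun n => ?_
        obtain ⟨j, hj⟩ := hesurj (ρ (ip 0) n) (hρlt (ip 0) n)
        have h1 := hip' (q (n, j))
        rw [heq (q (n, j))] at h1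
        simp only [hD, Equiv.symm_apply_apply] at h1
        rw [if_pos hj.ge] at h1
        exact h1.1
  · intro A hAU hA
    rcases eq_or_ne β 0 with rfl | hβ
    · exact funAdd_zero_iff.2
        (discrete_funOpen_iUnion (hU.mono hAU) (fun i => funAdd_zero_iff.1 (hA i)))
    · obtain ⟨e, helt, hesurj⟩ := exists_enum_Iio hβ hβω
      choose g hg hAg using fun i => (mem_funAdd_iff hβ).1 (hA i)
      choose ρ hρlt hρmem using hg
      set N : ℕ → ℕ → I → Set X :=
        fun n j i => if ρ i n ≤ e j then g i n else ∅ with hN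
      have hNU : ∀ n j i, N n j i ⊆ U i := by
        intro n j i
        simp only [hN]
        split_ifs
        · have hsub : (⋃ m, g i m) ⊆ U i := by rw [← hAg i]; exact hAU i
          exact (subset_iUnion (g i) n).trans hsub
        · exact empty_subset _
      have hNmul : ∀ n j i, N n j i ∈ FunMul X (e j) := by
        intro n j i
        simp only [hN]
        split_ifs with hle
        · exact funMul_mono hle (hρmem i n)
        · exact empty_mem_funMul _
      have hT : ∀ n j, (⋃ i, N n j i) ∈ FunMul X (e j) := fun n j =>
        (IH (e j) (helt j) ((helt j).trans hβω)).1 (N n j) (hNU n j) (hNmul n j)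
      set q : ℕ × ℕ ≃ ℕ := Denumerable.eqv (ℕ × ℕ) with hq
      refine (mem_funAdd_iff hβ).2 ⟨fun p => ⋃ i, N (q.symm p).1 (q.symm p).2 i,
        fun p => ⟨e (q.symm p).2, helt _, hT _ _⟩, ?_⟩
      ext x
      simp only [mem_iUnion]
      constructor
      · rintro ⟨i, hxi⟩
        rw [hAg i] at hxi
        obtain ⟨n, hn⟩ := mem_iUnion.1 hxi
        obtain ⟨j, hj⟩ := hesurj (ρ i n) (hρlt i n)
        refine ⟨q (n, j), i, ?_⟩
        simp only [hN, Equiv.symm_apply_apply]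
        rw [if_pos hj.ge]
        exact hn
      · rintro ⟨p, i, hxi⟩
        refine ⟨i, ?_⟩
        rw [hAg i]
        simp only [hN] at hxi
        split_ifs at hxi with hle
        · exact mem_iUnion.2 ⟨_, hxi⟩
        · exact absurd hxi (notMem_empty x)

end Main

theorem stmt8 {X Y : Type*} [TopologicalSpace X] [TopologicalSpace Y]
    (α : Ordinal) (h0 : 0 < α) (hα : α < ω₁)
    (f : X → Y) (hf : SigmaSFDAmb α f) :
    LebClass α f := by
  classical
  obtain ⟨B, hBsfd, hBamb, hBbase⟩ := hf
  intro V hV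
  have hα0 : α ≠ 0 := h0.ne'
  obtain ⟨S, hSB, hSV⟩ := hBbase V hV
  have hn : ∀ n : ℕ,
      (⋃ b : B n, (if (b : Set X) ∈ S then (b : Set X) else ∅)) ∈ FunAdd X α := by
    intro n
    obtain ⟨U, hUd, hUo, hUcl⟩ := hBsfd n
    refine (TU U hUd hUo α hα).2 _ ?_ ?_
    · intro b
      split_ifs
      · exact subset_closure.trans (hUcl b)
      · exact empty_subset _
    · intro b
      split_ifs with hb
      · exact (hBamb n b b.2).1
      · exact funOpen_mem_funAdd funOpen_empty α
  have hpre : f ⁻¹' V = ⋃ n, ⋃ b : B n, (if (b : Set X) ∈ S then (b : Set X) else ∅) := by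
    rw [hSV]
    ext x
    simp only [mem_sUnion, mem_iUnion]
    constructor
    · rintro ⟨s, hsS, hxs⟩
      obtain ⟨n, hn'⟩ := mem_iUnion.1 (hSB hsS)
      refine ⟨n, ⟨s, hn'⟩, ?_⟩
      rw [if_pos hsS]
      exact hxs
    · rintro ⟨n, b, hxb⟩
      by_cases hb : (b : Set X) ∈ S
      · rw [if_pos hb] at hxb
        exact ⟨b, hb, hxb⟩
      · rw [if_neg hb] at hxb
        exact absurd hxb (notMem_empty x)
  rw [hpre]
  exact funAdd_iUnion hα0 hn
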